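/- Let α be a nonplanar unit-speed curve with curvature κ > 0 and torsion τ, and let a, b, c be real constants with a² + b² + c² = 1. Then the F-constant vector field W = aT + bN + cB is orthogonal to some fixed nonzero direction V if and only if −b·κ²·(τ/κ)' = c·κ·((1−c²)κ² + (1−3a²)τ²) + a·τ·((1−a²)τ² + (1−3c²)κ²) holds identically. -/

import Mathlib

open Real Set
noncomputable section
set_option maxHeartbeats 1000000
def dot3 (u v : Fin 3 → ℝ) : ℝ := ∑ i, u i * v i

namespace GHNE

lemma dot3_expand (u v : Fin 3 → ℝ) :
    dot3 u v = u 0 * v 0 + u 1 * v 1 + u 2 * v 2 := by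
  simp [dot3, Fin.sum_univ_three]

lemma comb_apply (x y z : ℝ) (Tv Nv Bv : Fin 3 → ℝ) (i : Fin 3) :
    (x • Tv + y • Nv + z • Bv) i = x * Tv i + y * Nv i + z * Bv i := by
  simp [Pi.add_apply, Pi.smul_apply, smul_eq_mul]

lemma cross0 (u v : Fin 3 → ℝ) : crossProduct u v 0 = u 1 * v 2 - u 2 * v 1 := by
  rw [cross_apply]; rfl
lemma cross1 (u v : Fin 3 → ℝ) : crossProduct u v 1 = u 2 * v 0 - u 0 * v 2 := by
  rw [cross_apply]; rfl
lemma cross2 (u v : Fin 3 → ℝ) : crossProduct u v 2 = u 0 * v 1 - u 1 * v 0 := by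
  rw [cross_apply]; rfl

/-- scalar version of: V orthogonal to a right-handed orthonormal frame is zero -/
lemma scalar_perp (t0 t1 t2 n0 n1 n2 v0 v1 v2 : ℝ)
    (hTT : t0*t0+t1*t1+t2*t2 = 1) (hNN : n0*n0+n1*n1+n2*n2 = 1)
    (hTN : t0*n0+t1*n1+t2*n2 = 0)
    (h1 : t0*v0+t1*v1+t2*v2 = 0) (h2 : n0*v0+n1*v1+n2*v2 = 0)
    (h3 : (t1*n2-t2*n1)*v0 + (t2*n0-t0*n2)*v1 + (t0*n1-t1*n0)*v2 = 0) :
    v0 = 0 ∧ v1 = 0 ∧ v2 = 0 := by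
  have z0 : v1*(t0*n1-t1*n0) - v2*(t2*n0-t0*n2) = 0 := by linear_combination t0*h2 - n0*h1
  have z1 : v2*(t1*n2-t2*n1) - v0*(t0*n1-t1*n0) = 0 := by linear_combination t1*h2 - n1*h1
  have z2 : v0*(t2*n0-t0*n2) - v1*(t1*n2-t2*n1) = 0 := by linear_combination t2*h2 - n2*h1
  have hbb : (t1*n2-t2*n1)^2+(t2*n0-t0*n2)^2+(t0*n1-t1*n0)^2 = 1 := by
    linear_combination (n0*n0+n1*n1+n2*n2)*hTT + hNN - (t0*n0+t1*n1+t2*n2)*hTN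
  have hvv : v0^2+v1^2+v2^2 = 0 := by
    linear_combination (-(v0^2+v1^2+v2^2))*hbb +
      (v0*(t1*n2-t2*n1)+v1*(t2*n0-t0*n2)+v2*(t0*n1-t1*n0))*h3 +
      (v1*(t0*n1-t1*n0) - v2*(t2*n0-t0*n2))*z0 +
      (v2*(t1*n2-t2*n1) - v0*(t0*n1-t1*n0))*z1 +
      (v0*(t2*n0-t0*n2) - v1*(t1*n2-t2*n1))*z2
  refine ⟨?_, ?_, ?_⟩ <;> nlinarith [sq_nonneg v0, sq_nonneg v1, sq_nonneg v2]

lemma perp_frame_zero (Tv Nv Bv V : Fin 3 → ℝ)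
    (hB : Bv = crossProduct Tv Nv)
    (hTT : dot3 Tv Tv = 1) (hNN : dot3 Nv Nv = 1) (hTN : dot3 Tv Nv = 0)
    (h1 : dot3 Tv V = 0) (h2 : dot3 Nv V = 0) (h3 : dot3 Bv V = 0) :
    V = 0 := by
  rw [dot3_expand] at hTT hNN hTN h1 h2 h3
  rw [hB, cross0, cross1, cross2] at h3
  obtain ⟨e0, e1, e2⟩ := scalar_perp (Tv 0) (Tv 1) (Tv 2) (Nv 0) (Nv 1) (Nv 2)
    (V 0) (V 1) (V 2) (by linarith [hTT]) (by linarith [hNN]) hTN h1 h2 (by linarith [h3])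
  funext i
  fin_cases i <;> simpa


lemma dot3_comb (x1 x2 x3 y1 y2 y3 : ℝ) (Tv Nv Bv : Fin 3 → ℝ)
    (hTT : dot3 Tv Tv = 1) (hNN : dot3 Nv Nv = 1) (hBB : dot3 Bv Bv = 1)
    (hTN : dot3 Tv Nv = 0) (hTB : dot3 Tv Bv = 0) (hNB : dot3 Nv Bv = 0) :
    dot3 (x1 • Tv + x2 • Nv + x3 • Bv) (y1 • Tv + y2 • Nv + y3 • Bv)
      = x1*y1 + x2*y2 + x3*y3 := by
  rw [dot3_expand] at hTT hNN hBB hTN hTB hNB ⊢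
  simp only [comb_apply]
  linear_combination x1*y1*hTT + x2*y2*hNN + x3*y3*hBB + (x1*y2+x2*y1)*hTN +
    (x1*y3+x3*y1)*hTB + (x2*y3+x3*y2)*hNB

lemma dot3_comb_left (x1 x2 x3 : ℝ) (Tv Nv Bv V : Fin 3 → ℝ) :
    dot3 (x1 • Tv + x2 • Nv + x3 • Bv) V
      = x1 * dot3 Tv V + x2 * dot3 Nv V + x3 * dot3 Bv V := by
  simp only [dot3_expand, comb_apply]; ring

lemma hasDerivAt_comb {T N B : ℝ → Fin 3 → ℝ} {κ τ : ℝ → ℝ} {s : ℝ}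
    (hT' : HasDerivAt T (κ s • N s) s)
    (hN' : HasDerivAt N (-κ s • T s + τ s • B s) s)
    (hB' : HasDerivAt B (-τ s • N s) s)
    {f g h : ℝ → ℝ} {f' g' h' : ℝ}
    (hf : HasDerivAt f f' s) (hg : HasDerivAt g g' s) (hh : HasDerivAt h h' s) :
    HasDerivAt (fun r => f r • T r + g r • N r + h r • B r)
      ((f' - κ s * g s) • T s + (g' + κ s * f s - τ s * h s) • N s
        + (h' + τ s * g s) • B s) s := by
  have H := ((hf.smul hT').add (hg.smul hN')).add (hh.smul hB')
  refine H.congr_deriv ?_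
  funext i
  simp only [comb_apply, Pi.add_apply, Pi.smul_apply, smul_eq_mul, Pi.neg_apply]
  ring

lemma hasDerivAt_dot3_const {F : ℝ → Fin 3 → ℝ} {F' : Fin 3 → ℝ} {s : ℝ}
    (h : HasDerivAt F F' s) (V : Fin 3 → ℝ) :
    HasDerivAt (fun r => dot3 (F r) V) (dot3 F' V) s := by
  have h0 : HasDerivAt (fun r => F r 0) (F' 0) s := hasDerivAt_pi.mp h 0
  have h1 : HasDerivAt (fun r => F r 1) (F' 1) s := hasDerivAt_pi.mp h 1
  have h2 : HasDerivAt (fun r => F r 2) (F' 2) s := hasDerivAt_pi.mp h 2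
  have H := ((h0.mul_const (V 0)).add (h1.mul_const (V 1))).add (h2.mul_const (V 2))
  have he : (fun r => dot3 (F r) V)
      = fun r => F r 0 * V 0 + F r 1 * V 1 + F r 2 * V 2 := by
    funext r; rw [dot3_expand]
  rw [he, dot3_expand]
  exact H

lemma det3_zero (w1 w2 w3 p1 p2 p3 r1 r2 r3 v1 v2 v3 : ℝ)
    (h1 : w1*v1+w2*v2+w3*v3 = 0) (h2 : p1*v1+p2*v2+p3*v3 = 0)
    (h3 : r1*v1+r2*v2+r3*v3 = 0)
    (hv : ¬(v1 = 0 ∧ v2 = 0 ∧ v3 = 0)) :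
    w1*(p2*r3-p3*r2) - w2*(p1*r3-p3*r1) + w3*(p1*r2-p2*r1) = 0 := by
  by_contra hD
  apply hv
  refine ⟨?_, ?_, ?_⟩
  · have hz : (w1*(p2*r3-p3*r2) - w2*(p1*r3-p3*r1) + w3*(p1*r2-p2*r1)) * v1 = 0 := by
      linear_combination (p2*r3-p3*r2)*h1 - (w2*r3-w3*r2)*h2 + (w2*p3-w3*p2)*h3
    exact (mul_eq_zero.mp hz).resolve_left hD
  · have hz : (w1*(p2*r3-p3*r2) - w2*(p1*r3-p3*r1) + w3*(p1*r2-p2*r1)) * v2 = 0 := by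
      linear_combination (-(p1*r3-p3*r1))*h1 + (w1*r3-w3*r1)*h2 - (w1*p3-w3*p1)*h3
    exact (mul_eq_zero.mp hz).resolve_left hD
  · have hz : (w1*(p2*r3-p3*r2) - w2*(p1*r3-p3*r1) + w3*(p1*r2-p2*r1)) * v3 = 0 := by
      linear_combination (p1*r2-p2*r1)*h1 - (w1*r2-w2*r1)*h2 + (w1*p2-w2*p1)*h3
    exact (mul_eq_zero.mp hz).resolve_left hD


/-- Pure algebra: the derivative coefficients `q` of `U = W ×ᶠ W'` are parallel to `u`,
given the natural equation. -/
lemma q_parallel (a b c k t kp tp u1 u2 u3 d1 d2 d3 q1 q2 q3 g : ℝ)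
    (hu1 : u1 = (b^2+c^2)*t - a*c*k) (hu2 : u2 = -(b*c*k) - a*b*t)
    (hu3 : u3 = (a^2+b^2)*k - a*c*t)
    (hd1 : d1 = (b^2+c^2)*tp - a*c*kp) (hd2 : d2 = -(b*c*kp) - a*b*tp)
    (hd3 : d3 = (a^2+b^2)*kp - a*c*tp)
    (hq1 : q1 = d1 - k*u2) (hq2 : q2 = d2 + k*u1 - t*u3) (hq3 : q3 = d3 + t*u2)
    (hg : g = u1^2+u2^2+u3^2) (hgpos : 0 < g)
    (habc : a^2+b^2+c^2 = 1)
    (hE : b*(t*kp - k*tp) = c*k*((1-c^2)*k^2 + (1-3*a^2)*t^2)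
        + a*t*((1-a^2)*t^2 + (1-3*c^2)*k^2)) :
    q1 = ((u1*d1+u2*d2+u3*d3)/g)*u1 ∧ q2 = ((u1*d1+u2*d2+u3*d3)/g)*u2 ∧
      q3 = ((u1*d1+u2*d2+u3*d3)/g)*u3 := by
  subst hu1 hu2 hu3 hd1 hd2 hd3 hq1 hq2 hq3 hg
  set u1 := (b^2+c^2)*t - a*c*k with hu1
  set u2 := -(b*c*k) - a*b*t with hu2
  set u3 := (a^2+b^2)*k - a*c*t with hu3
  set d1 := (b^2+c^2)*tp - a*c*kp with hd1
  set d2 := -(b*c*kp) - a*b*tp with hd2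
  set d3 := (a^2+b^2)*kp - a*c*tp with hd3
  set q1 := d1 - k*u2 with hq1
  set q2 := d2 + k*u1 - t*u3 with hq2
  set q3 := d3 + t*u2 with hq3
  set p1 := -(b*k) with hp1
  set p2 := a*k - c*t with hp2
  set p3 := b*t with hp3
  have hqw : a*q1 + b*q2 + c*q3 = 0 := by
    simp only [hq1, hq2, hq3, hd1, hd2, hd3, hu1, hu2, hu3]; ring
  have hqp : p1*q1 + p2*q2 + p3*q3 = 0 := by
    simp only [hq1, hq2, hq3, hd1, hd2, hd3, hu1, hu2, hu3, hp1, hp2, hp3]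
    linear_combination hE - (c*k*t^2+c*k^3-b*t*kp+b*k*tp+a*t^3+a*k^2*t)*habc
  have z12 : q1*u2 - q2*u1 = 0 := by
    have : q1*u2 - q2*u1 - (c*(p1*q1+p2*q2+p3*q3) - p3*(a*q1+b*q2+c*q3)) = 0 := by
      simp only [hq1, hq2, hq3, hd1, hd2, hd3, hu1, hu2, hu3, hp1, hp2, hp3]; ring
    rw [hqp, hqw] at this; linarith
  have z23 : q2*u3 - q3*u2 = 0 := by
    have : q2*u3 - q3*u2 - (a*(p1*q1+p2*q2+p3*q3) - p1*(a*q1+b*q2+c*q3)) = 0 := by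
      simp only [hq1, hq2, hq3, hd1, hd2, hd3, hu1, hu2, hu3, hp1, hp2, hp3]; ring
    rw [hqp, hqw] at this; linarith
  have z31 : q3*u1 - q1*u3 = 0 := by
    have : q3*u1 - q1*u3 - (b*(p1*q1+p2*q2+p3*q3) - p2*(a*q1+b*q2+c*q3)) = 0 := by
      simp only [hq1, hq2, hq3, hd1, hd2, hd3, hu1, hu2, hu3, hp1, hp2, hp3]; ring
    rw [hqp, hqw] at this; linarith
  have hudot : u1*q1 + u2*q2 + u3*q3 = u1*d1 + u2*d2 + u3*d3 := by
    simp only [hq1, hq2, hq3]; ring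
  have hgne : (u1^2+u2^2+u3^2) ≠ 0 := ne_of_gt hgpos
  refine ⟨?_, ?_, ?_⟩
  · rw [div_mul_eq_mul_div, eq_div_iff hgne]
    linear_combination u1*hudot + u2*z12 - u3*z31
  · rw [div_mul_eq_mul_div, eq_div_iff hgne]
    linear_combination u2*hudot + u3*z23 - u1*z12
  · rw [div_mul_eq_mul_div, eq_div_iff hgne]
    linear_combination u3*hudot + u1*z31 - u2*z23

lemma dot3_smul_both (r : ℝ) (x y : Fin 3 → ℝ) :
    dot3 (r • x) (r • y) = r^2 * dot3 x y := by
  simp only [dot3_expand, Pi.smul_apply, smul_eq_mul]; ring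

lemma dot3_smul_right (r : ℝ) (x y : Fin 3 → ℝ) :
    dot3 x (r • y) = r * dot3 x y := by
  simp only [dot3_expand, Pi.smul_apply, smul_eq_mul]; ring

/-- A nonvanishing vector field whose derivative is pointwise parallel to itself
(with the logarithmic-derivative coefficient) has constant direction. -/
lemma const_direction {U : ℝ → Fin 3 → ℝ} {g dg : ℝ → ℝ}
    (hgd : ∀ r, HasDerivAt g (dg r) r) (hgpos : ∀ r, 0 < g r)
    (hUd : ∀ r, HasDerivAt U ((dg r / (2 * g r)) • U r) r) (r : ℝ) :
    (Real.sqrt (g r))⁻¹ • U r = (Real.sqrt (g 0))⁻¹ • U 0 := by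
  have key : ∀ x, HasDerivAt (fun y => (Real.sqrt (g y))⁻¹ • U y) 0 x := by
    intro x
    have hgx := hgpos x
    have hsqpos : 0 < Real.sqrt (g x) := Real.sqrt_pos.mpr hgx
    have hsq : Real.sqrt (g x) ≠ 0 := ne_of_gt hsqpos
    have hs : HasDerivAt (fun y => Real.sqrt (g y)) (dg x / (2 * Real.sqrt (g x))) x :=
      (hgd x).sqrt (ne_of_gt hgx)
    have hinv : HasDerivAt (fun y => (Real.sqrt (g y))⁻¹)
        (-(dg x / (2 * Real.sqrt (g x))) / (Real.sqrt (g x))^2) x := hs.inv hsq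
    have hS := hinv.smul (hUd x)
    have hval : (Real.sqrt (g x))⁻¹ • ((dg x / (2 * g x)) • U x)
        + (-(dg x / (2 * Real.sqrt (g x))) / (Real.sqrt (g x))^2) • U x = 0 := by
      rw [smul_smul, ← add_smul]
      have hx2 : Real.sqrt (g x)^2 = g x := Real.sq_sqrt (le_of_lt hgx)
      have hcoef : (Real.sqrt (g x))⁻¹ * (dg x / (2 * g x))
          + (-(dg x / (2 * Real.sqrt (g x))) / (Real.sqrt (g x))^2) = 0 := by
        rw [hx2]
        field_simp
        ring
      rw [hcoef, zero_smul]
    rw [hval] at hS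
    exact hS
  exact is_const_of_deriv_eq_zero (fun x => (key x).differentiableAt)
    (fun x => (key x).deriv) r 0

end GHNE

open GHNE

/-- Natural equation of general helices: for a nonplanar unit-speed curve `α` with
curvature `κ > 0`, nowhere-zero torsion `τ`, and real constants `a, b, c` with
`a² + b² + c² = 1`, the `F`-constant field `W = a•T + b•N + c•B` is orthogonal to some
fixed nonzero direction `V` if and only if
`−b·κ²·(τ/κ)' = c·κ·((1−c²)κ² + (1−3a²)τ²) + a·τ·((1−a²)τ² + (1−3c²)κ²)` identically. -/
theorem general_helix_natural_equation
    (α T N B : ℝ → (Fin 3 → ℝ)) (κ τ : ℝ → ℝ) (a b c : ℝ)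
    (habc : a^2 + b^2 + c^2 = 1)
    (hα : ∀ s, deriv α s = T s)
    (hκ : ∀ s, 0 < κ s) (hτ : ∀ s, τ s ≠ 0)
    (hκd : Differentiable ℝ κ) (hτd : Differentiable ℝ τ)
    (hT : ∀ s, deriv T s = κ s • N s)
    (hN : ∀ s, deriv N s = -κ s • T s + τ s • B s)
    (hB : ∀ s, deriv B s = -τ s • N s)
    (hTT : ∀ s, dot3 (T s) (T s) = 1) (hNN : ∀ s, dot3 (N s) (N s) = 1)
    (hBB : ∀ s, dot3 (B s) (B s) = 1)
    (hTN : ∀ s, dot3 (T s) (N s) = 0) (hTB : ∀ s, dot3 (T s) (B s) = 0)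
    (hNB : ∀ s, dot3 (N s) (B s) = 0)
    (hori : ∀ s, B s = crossProduct (T s) (N s)) :
    (∃ V : Fin 3 → ℝ, V ≠ 0 ∧
        ∀ s, dot3 (a • T s + b • N s + c • B s) V = 0) ↔
      (∀ s, -b * (κ s)^2 * deriv (fun u => τ u / κ u) s =
        c * κ s * ((1 - c^2) * (κ s)^2 + (1 - 3*a^2) * (τ s)^2) +
          a * τ s * ((1 - a^2) * (τ s)^2 + (1 - 3*c^2) * (κ s)^2)) := by
  classical
  -- the frame vector fields are differentiable (their stated derivatives are nonzero)
  have hTd : ∀ r, HasDerivAt T (κ r • N r) r := by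
    intro r
    have hne : deriv T r ≠ 0 := by
      rw [hT r]
      intro h0
      have h1 : dot3 (κ r • N r) (N r) = κ r := by
        have hn := hNN r
        rw [dot3_expand] at hn ⊢
        simp only [Pi.smul_apply, smul_eq_mul]
        linear_combination κ r * hn
      rw [h0, dot3_expand] at h1
      simp only [Pi.zero_apply, zero_mul, add_zero, zero_add] at h1
      exact (ne_of_gt (hκ r)) h1.symm
    exact (hT r) ▸ (differentiableAt_of_deriv_ne_zero hne).hasDerivAt
  have hNd : ∀ r, HasDerivAt N (-κ r • T r + τ r • B r) r := by
    intro r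
    have hne : deriv N r ≠ 0 := by
      rw [hN r]
      intro h0
      have h1 : dot3 (-κ r • T r + τ r • B r) (B r) = τ r := by
        have h2 := hTB r; have h3 := hBB r
        rw [dot3_expand] at h2 h3 ⊢
        simp only [Pi.add_apply, Pi.smul_apply, Pi.neg_apply, smul_eq_mul, neg_mul]
        linear_combination (-κ r) * h2 + τ r * h3
      rw [h0, dot3_expand] at h1
      simp only [Pi.zero_apply, zero_mul, add_zero, zero_add] at h1
      exact (hτ r) h1.symm
    exact (hN r) ▸ (differentiableAt_of_deriv_ne_zero hne).hasDerivAt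
  have hBd : ∀ r, HasDerivAt B (-τ r • N r) r := by
    intro r
    have hne : deriv B r ≠ 0 := by
      rw [hB r]
      intro h0
      have h1 : dot3 (-τ r • N r) (N r) = -τ r := by
        have hn := hNN r
        rw [dot3_expand] at hn ⊢
        simp only [Pi.smul_apply, Pi.neg_apply, smul_eq_mul, neg_mul]
        linear_combination (-τ r) * hn
      rw [h0, dot3_expand] at h1
      simp only [Pi.zero_apply, zero_mul, add_zero, zero_add] at h1
      exact (hτ r) (neg_eq_zero.mp h1.symm)
    exact (hB r) ▸ (differentiableAt_of_deriv_ne_zero hne).hasDerivAt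
  -- rewrite the LHS of the natural equation
  have hLHS : ∀ r, -b * (κ r)^2 * deriv (fun u => τ u / κ u) r
      = b * (τ r * deriv κ r - κ r * deriv τ r) := by
    intro r
    rw [deriv_fun_div (hτd r) (hκd r) (ne_of_gt (hκ r))]
    have hk := ne_of_gt (hκ r)
    field_simp
    ring
  -- derivative of W
  have hWd : ∀ r, HasDerivAt (fun x => a • T x + b • N x + c • B x)
      ((-(b * κ r)) • T r + (a * κ r - c * τ r) • N r + (b * τ r) • B r) r := by
    intro r
    have h := hasDerivAt_comb (hTd r) (hNd r) (hBd r)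
      (hasDerivAt_const r a) (hasDerivAt_const r b) (hasDerivAt_const r c)
    convert h using 1
    funext i
    simp only [comb_apply]
    ring
  -- derivative of W'
  have hPd : ∀ r, HasDerivAt (fun x => (-(b * κ x)) • T x + (a * κ x - c * τ x) • N x
        + (b * τ x) • B x)
      (((-(b * deriv κ r)) - κ r * (a * κ r - c * τ r)) • T r
        + ((a * deriv κ r - c * deriv τ r) + κ r * (-(b * κ r)) - τ r * (b * τ r)) • N r
        + ((b * deriv τ r) + τ r * (a * κ r - c * τ r)) • B r) r := by
    intro r
    exact hasDerivAt_comb (hTd r) (hNd r) (hBd r)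
      (((hκd r).hasDerivAt.const_mul b).neg)
      (((hκd r).hasDerivAt.const_mul a).sub ((hτd r).hasDerivAt.const_mul c))
      ((hτd r).hasDerivAt.const_mul b)
  constructor
  · rintro ⟨V, hV0, hVperp⟩ s
    have h2' : ∀ r, dot3 ((-(b * κ r)) • T r + (a * κ r - c * τ r) • N r
        + (b * τ r) • B r) V = 0 := by
      intro r
      have hd := hasDerivAt_dot3_const (hWd r) V
      have hz : (fun x => dot3 (a • T x + b • N x + c • B x) V) = (fun _ => (0:ℝ)) :=
        funext hVperp
      rw [hz] at hd
      exact ((hasDerivAt_const r (0:ℝ)).unique hd).symm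
    have h3' : ∀ r, dot3 (((-(b * deriv κ r)) - κ r * (a * κ r - c * τ r)) • T r
        + ((a * deriv κ r - c * deriv τ r) + κ r * (-(b * κ r)) - τ r * (b * τ r)) • N r
        + ((b * deriv τ r) + τ r * (a * κ r - c * τ r)) • B r) V = 0 := by
      intro r
      have hd := hasDerivAt_dot3_const (hPd r) V
      have hz : (fun x => dot3 ((-(b * κ x)) • T x + (a * κ x - c * τ x) • N x
          + (b * τ x) • B x) V) = (fun _ => (0:ℝ)) := funext h2'
      rw [hz] at hd
      exact ((hasDerivAt_const r (0:ℝ)).unique hd).symm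
    have e1 : a * dot3 (T s) V + b * dot3 (N s) V + c * dot3 (B s) V = 0 := by
      rw [← dot3_comb_left]; exact hVperp s
    have e2 : (-(b * κ s)) * dot3 (T s) V + (a * κ s - c * τ s) * dot3 (N s) V
        + (b * τ s) * dot3 (B s) V = 0 := by
      rw [← dot3_comb_left]; exact h2' s
    have e3 : ((-(b * deriv κ s)) - κ s * (a * κ s - c * τ s)) * dot3 (T s) V
        + ((a * deriv κ s - c * deriv τ s) + κ s * (-(b * κ s)) - τ s * (b * τ s)) * dot3 (N s) V
        + ((b * deriv τ s) + τ s * (a * κ s - c * τ s)) * dot3 (B s) V = 0 := by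
      rw [← dot3_comb_left]; exact h3' s
    have hvne : ¬(dot3 (T s) V = 0 ∧ dot3 (N s) V = 0 ∧ dot3 (B s) V = 0) := by
      rintro ⟨f1, f2, f3⟩
      exact hV0 (perp_frame_zero (T s) (N s) (B s) V (hori s) (hTT s) (hNN s) (hTN s) f1 f2 f3)
    have hdet := det3_zero _ _ _ _ _ _ _ _ _ _ _ _ e1 e2 e3 hvne
    rw [hLHS s]
    linear_combination (-1) * hdet + (c * κ s * τ s^2 + c * κ s^3 - b * τ s * deriv κ s
      + b * κ s * deriv τ s + a * τ s^3 + a * κ s^2 * τ s) * habc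
  · intro heq
    have heq' : ∀ r, b * (τ r * deriv κ r - κ r * deriv τ r)
        = c * κ r * ((1 - c^2) * (κ r)^2 + (1 - 3*a^2) * (τ r)^2)
          + a * τ r * ((1 - a^2) * (τ r)^2 + (1 - 3*c^2) * (κ r)^2) :=
      fun r => (hLHS r).symm.trans (heq r)
    by_cases hb : b = 0
    · -- planar-coefficient case
      subst hb
      have hfac : ∀ r, (c * τ r - a * κ r)^2 * (c * κ r + a * τ r) = 0 := by
        intro r
        linear_combination (-1) * (heq' r)
          + (c * κ r * τ r^2 + c * κ r^3 + a * τ r^3 + a * κ r^2 * τ r) * habc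
      have hnb : ∀ r, ¬(c * τ r - a * κ r = 0 ∧ c * κ r + a * τ r = 0) := by
        rintro r ⟨m1, m2⟩
        have hkt : κ r^2 * τ r = 0 := by
          linear_combination (-(a * κ r * τ r)) * m1 + (c * κ r * τ r) * m2
            - (κ r^2 * τ r) * habc
        exact mul_ne_zero (pow_ne_zero 2 (ne_of_gt (hκ r))) (hτ r) hkt
      have hall : (∀ r, c * τ r - a * κ r = 0) ∨ (∀ r, c * κ r + a * τ r = 0) := by
        by_contra hcon
        push_neg at hcon
        obtain ⟨s1, hs1⟩ := hcon.1
        obtain ⟨s2, hs2⟩ := hcon.2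
        have hf2s1 : c * κ s1 + a * τ s1 = 0 := by
          rcases mul_eq_zero.mp (hfac s1) with h | h
          · exact absurd (pow_eq_zero_iff two_ne_zero |>.mp h) hs1
          · exact h
        have hf1s2 : c * τ s2 - a * κ s2 = 0 := by
          rcases mul_eq_zero.mp (hfac s2) with h | h
          · exact pow_eq_zero_iff two_ne_zero |>.mp h
          · exact absurd h hs2
        have hFc : Continuous fun r => (c * τ r - a * κ r)^2 - (c * κ r + a * τ r)^2 :=
          (((continuous_const.mul hτd.continuous).sub
            (continuous_const.mul hκd.continuous)).pow 2).sub
          (((continuous_const.mul hκd.continuous).add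
            (continuous_const.mul hτd.continuous)).pow 2)
        have hFs1 : 0 < (c * τ s1 - a * κ s1)^2 - (c * κ s1 + a * τ s1)^2 := by
          rw [hf2s1]
          have : 0 < (c * τ s1 - a * κ s1)^2 :=
            lt_of_le_of_ne (sq_nonneg _) (Ne.symm (pow_ne_zero 2 hs1))
          nlinarith
        have hFs2 : (c * τ s2 - a * κ s2)^2 - (c * κ s2 + a * τ s2)^2 < 0 := by
          rw [hf1s2]
          have hne2 : c * κ s2 + a * τ s2 ≠ 0 := fun h => hnb s2 ⟨hf1s2, h⟩
          have : 0 < (c * κ s2 + a * τ s2)^2 :=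
            lt_of_le_of_ne (sq_nonneg _) (Ne.symm (pow_ne_zero 2 hne2))
          nlinarith
        have hiv := intermediate_value_uIcc (a := s1) (b := s2)
          (f := fun r => (c * τ r - a * κ r)^2 - (c * κ r + a * τ r)^2) hFc.continuousOn
        have h0mem : (0:ℝ) ∈ Set.uIcc ((c * τ s1 - a * κ s1)^2 - (c * κ s1 + a * τ s1)^2)
            ((c * τ s2 - a * κ s2)^2 - (c * κ s2 + a * τ s2)^2) :=
          Set.mem_uIcc.mpr (Or.inr ⟨le_of_lt hFs2, le_of_lt hFs1⟩)
        obtain ⟨s0, _, hs0⟩ := hiv h0mem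
        have hb1 : (c * τ s0 - a * κ s0)^2 = (c * κ s0 + a * τ s0)^2 := by
          have := hs0
          simp only at this
          linarith [this.symm ▸ (rfl : (0:ℝ) = 0)]
        rcases mul_eq_zero.mp (hfac s0) with h | h
        · have h1 : c * τ s0 - a * κ s0 = 0 := pow_eq_zero_iff two_ne_zero |>.mp h
          have h2 : c * κ s0 + a * τ s0 = 0 := by
            have : (c * κ s0 + a * τ s0)^2 = 0 := by rw [← hb1, h1]; ring
            exact pow_eq_zero_iff two_ne_zero |>.mp this
          exact hnb s0 ⟨h1, h2⟩
        · have h1 : c * τ s0 - a * κ s0 = 0 := by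
            have : (c * τ s0 - a * κ s0)^2 = 0 := by rw [hb1, h]; ring
            exact pow_eq_zero_iff two_ne_zero |>.mp this
          exact hnb s0 ⟨h1, h⟩
      rcases hall with hall | hall
      · -- W is constant; pick any nonzero vector orthogonal to W 0
        have hW0 : ∀ r, HasDerivAt (fun x => a • T x + (0:ℝ) • N x + c • B x) 0 r := by
          intro r
          have hcoef : (-(0 * κ r)) • T r + (a * κ r - c * τ r) • N r + (0 * τ r) • B r
              = (0 : Fin 3 → ℝ) := by
            have hz : a * κ r - c * τ r = 0 := by linear_combination (-1) * (hall r)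
            rw [hz]
            funext i
            simp [comb_apply]
          exact hcoef ▸ hWd r
        have hWc : ∀ r, a • T r + (0:ℝ) • N r + c • B r = a • T 0 + (0:ℝ) • N 0 + c • B 0 :=
          fun r => is_const_of_deriv_eq_zero (fun x => (hW0 x).differentiableAt)
            (fun x => (hW0 x).deriv) r 0
      -- choose V orthogonal to the constant vector W 0
        by_cases hw : (a • T 0 + (0:ℝ) • N 0 + c • B 0) 0 = 0
            ∧ (a • T 0 + (0:ℝ) • N 0 + c • B 0) 1 = 0
        · refine ⟨![1, 0, 0], ?_, ?_⟩
          · intro h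
            have := congrFun h 0
            simp at this
          · intro r
            have hr : dot3 (a • T r + (0:ℝ) • N r + c • B r) ![1,0,0]
                = dot3 (a • T 0 + (0:ℝ) • N 0 + c • B 0) ![1,0,0] := by rw [hWc r]
            rw [hr, dot3_expand]
            rw [show ((![1,0,0] : Fin 3 → ℝ) 0) = 1 from rfl,
              show ((![1,0,0] : Fin 3 → ℝ) 1) = 0 from rfl,
              show ((![1,0,0] : Fin 3 → ℝ) 2) = 0 from rfl]
            rw [mul_one, mul_zero, mul_zero, add_zero, add_zero]
            exact hw.1
        · refine ⟨![(a • T 0 + (0:ℝ) • N 0 + c • B 0) 1,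
              -((a • T 0 + (0:ℝ) • N 0 + c • B 0) 0), 0], ?_, ?_⟩
          · intro h
            apply hw
            constructor
            · have := congrFun h 1
              simp only [Matrix.cons_val_one, Matrix.cons_val_zero, Matrix.head_cons, Pi.zero_apply, neg_eq_zero]
                at this
              exact this
            · have := congrFun h 0
              simpa using this
          · intro r
            have hr : dot3 (a • T r + (0:ℝ) • N r + c • B r)
                  ![(a • T 0 + (0:ℝ) • N 0 + c • B 0) 1,
                    -((a • T 0 + (0:ℝ) • N 0 + c • B 0) 0), 0]
                = dot3 (a • T 0 + (0:ℝ) • N 0 + c • B 0)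
                  ![(a • T 0 + (0:ℝ) • N 0 + c • B 0) 1,
                    -((a • T 0 + (0:ℝ) • N 0 + c • B 0) 0), 0] := by rw [hWc r]
            rw [hr, dot3_expand]
            rw [show (![(a • T 0 + (0:ℝ) • N 0 + c • B 0) 1,
                    -((a • T 0 + (0:ℝ) • N 0 + c • B 0) 0), 0] : Fin 3 → ℝ) 0
                = (a • T 0 + (0:ℝ) • N 0 + c • B 0) 1 from rfl,
              show (![(a • T 0 + (0:ℝ) • N 0 + c • B 0) 1,
                    -((a • T 0 + (0:ℝ) • N 0 + c • B 0) 0), 0] : Fin 3 → ℝ) 1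
                = -((a • T 0 + (0:ℝ) • N 0 + c • B 0) 0) from rfl,
              show (![(a • T 0 + (0:ℝ) • N 0 + c • B 0) 1,
                    -((a • T 0 + (0:ℝ) • N 0 + c • B 0) 0), 0] : Fin 3 → ℝ) 2
                = 0 from rfl]
            ring
      · -- Y = c T - a B is the constant axis
        have hY0 : ∀ r, HasDerivAt (fun x => c • T x + (0:ℝ) • N x + (-a) • B x) 0 r := by
          intro r
          have h := hasDerivAt_comb (hTd r) (hNd r) (hBd r)
            (hasDerivAt_const r c) (hasDerivAt_const r (0:ℝ)) (hasDerivAt_const r (-a))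
          have hcoef : (0 - κ r * (0:ℝ)) • T r + (0 + κ r * c - τ r * (-a)) • N r
              + (0 + τ r * (0:ℝ)) • B r = (0 : Fin 3 → ℝ) := by
            have hz : 0 + κ r * c - τ r * (-a) = 0 := by linear_combination hall r
            rw [hz]
            funext i
            simp [comb_apply]
          exact hcoef ▸ h
        have hYc : ∀ r, c • T r + (0:ℝ) • N r + (-a) • B r
            = c • T 0 + (0:ℝ) • N 0 + (-a) • B 0 :=
          fun r => is_const_of_deriv_eq_zero (fun x => (hY0 x).differentiableAt)
            (fun x => (hY0 x).deriv) r 0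
        refine ⟨c • T 0 + (0:ℝ) • N 0 + (-a) • B 0, ?_, ?_⟩
        · intro h
          have hd : dot3 (c • T 0 + (0:ℝ) • N 0 + (-a) • B 0)
              (c • T 0 + (0:ℝ) • N 0 + (-a) • B 0) = 1 := by
            rw [dot3_comb _ _ _ _ _ _ _ _ _ (hTT 0) (hNN 0) (hBB 0) (hTN 0) (hTB 0) (hNB 0)]
            linear_combination habc
          rw [h] at hd
          simp [dot3] at hd
        · intro r
          have hy : dot3 (a • T r + (0:ℝ) • N r + c • B r)
              (c • T 0 + (0:ℝ) • N 0 + (-a) • B 0)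
              = dot3 (a • T r + (0:ℝ) • N r + c • B r)
                (c • T r + (0:ℝ) • N r + (-a) • B r) := by rw [hYc r]
          rw [hy, dot3_comb _ _ _ _ _ _ _ _ _ (hTT r) (hNN r) (hBB r) (hTN r) (hTB r) (hNB r)]
          ring
    · -- main case: b ≠ 0
      set u1 : ℝ → ℝ := fun x => (b^2+c^2) * τ x - a*c*κ x with hu1
      set u2 : ℝ → ℝ := fun x => -(b*c*κ x) - a*b*τ x with hu2
      set u3 : ℝ → ℝ := fun x => (a^2+b^2) * κ x - a*c*τ x with hu3
      set d1 : ℝ → ℝ := fun x => (b^2+c^2) * deriv τ x - a*c*deriv κ x with hd1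
      set d2 : ℝ → ℝ := fun x => -(b*c*deriv κ x) - a*b*deriv τ x with hd2
      set d3 : ℝ → ℝ := fun x => (a^2+b^2) * deriv κ x - a*c*deriv τ x with hd3
      have hu1d : ∀ r, HasDerivAt u1 (d1 r) r := by
        intro r
        simp only [hu1, hd1]
        exact ((hτd r).hasDerivAt.const_mul _).sub ((hκd r).hasDerivAt.const_mul _)
      have hu2d : ∀ r, HasDerivAt u2 (d2 r) r := by
        intro r
        simp only [hu2, hd2]
        exact (((hκd r).hasDerivAt.const_mul _).neg).sub ((hτd r).hasDerivAt.const_mul _)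
      have hu3d : ∀ r, HasDerivAt u3 (d3 r) r := by
        intro r
        simp only [hu3, hd3]
        exact ((hκd r).hasDerivAt.const_mul _).sub ((hτd r).hasDerivAt.const_mul _)
      set g : ℝ → ℝ := fun x => u1 x^2 + u2 x^2 + u3 x^2 with hg
      have hgpos : ∀ r, 0 < g r := by
        intro r
        have hval : g r = (b*κ r)^2 + (a*κ r - c*τ r)^2 + (b*τ r)^2 := by
          simp only [hg, hu1, hu2, hu3]
          linear_combination (c^2*τ r^2 + b^2*τ r^2 + b^2*κ r^2 - 2*a*c*κ r*τ r
            + a^2*κ r^2) * habc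
        have h1 : 0 < (b*κ r)^2 :=
          lt_of_le_of_ne (sq_nonneg _) (Ne.symm (pow_ne_zero 2
            (mul_ne_zero hb (ne_of_gt (hκ r)))))
        rw [hval]
        nlinarith [sq_nonneg (a*κ r - c*τ r), sq_nonneg (b*τ r)]
      have hgd : ∀ r, HasDerivAt g (2 * (u1 r * d1 r + u2 r * d2 r + u3 r * d3 r)) r := by
        intro r
        have h := (((hu1d r).mul (hu1d r)).add ((hu2d r).mul (hu2d r))).add
          ((hu3d r).mul (hu3d r))
        have hfun : g = fun x => u1 x * u1 x + u2 x * u2 x + u3 x * u3 x := by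
          funext x; simp only [hg]; ring
        rw [hfun]
        refine h.congr_deriv ?_
        ring
      have hpar : ∀ r,
          d1 r - κ r * u2 r = ((u1 r * d1 r + u2 r * d2 r + u3 r * d3 r)/g r) * u1 r ∧
          d2 r + κ r * u1 r - τ r * u3 r
            = ((u1 r * d1 r + u2 r * d2 r + u3 r * d3 r)/g r) * u2 r ∧
          d3 r + τ r * u2 r = ((u1 r * d1 r + u2 r * d2 r + u3 r * d3 r)/g r) * u3 r := by
        intro r
        exact q_parallel a b c (κ r) (τ r) (deriv κ r) (deriv τ r)
          (u1 r) (u2 r) (u3 r) (d1 r) (d2 r) (d3 r)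
          (d1 r - κ r * u2 r) (d2 r + κ r * u1 r - τ r * u3 r) (d3 r + τ r * u2 r) (g r)
          (by simp only [hu1]) (by simp only [hu2]) (by simp only [hu3])
          (by simp only [hd1]) (by simp only [hd2]) (by simp only [hd3])
          rfl rfl rfl (by simp only [hg]) (hgpos r) habc (heq' r)
      set U : ℝ → Fin 3 → ℝ := fun x => u1 x • T x + u2 x • N x + u3 x • B x with hU
      have hUd : ∀ r, HasDerivAt U
          ((2 * (u1 r * d1 r + u2 r * d2 r + u3 r * d3 r) / (2 * g r)) • U r) r := by
        intro r
        have h := hasDerivAt_comb (hTd r) (hNd r) (hBd r) (hu1d r) (hu2d r) (hu3d r)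
        obtain ⟨e1, e2, e3⟩ := hpar r
        have hvec : (2 * (u1 r * d1 r + u2 r * d2 r + u3 r * d3 r) / (2 * g r)) • U r
            = (d1 r - κ r * u2 r) • T r + (d2 r + κ r * u1 r - τ r * u3 r) • N r
              + (d3 r + τ r * u2 r) • B r := by
          have hdiv : 2 * (u1 r * d1 r + u2 r * d2 r + u3 r * d3 r) / (2 * g r)
              = (u1 r * d1 r + u2 r * d2 r + u3 r * d3 r) / g r := by
            rw [mul_div_mul_left _ _ (two_ne_zero)]
          rw [hdiv, hU]
          funext i
          simp only [Pi.smul_apply, Pi.add_apply, smul_eq_mul]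
          rw [e1, e2, e3]
          ring
        rw [hvec]
        exact h
      have hconst := fun r => const_direction hgd hgpos hUd r
      refine ⟨(Real.sqrt (g 0))⁻¹ • U 0, ?_, ?_⟩
      · intro h0
        have hUU : dot3 (U 0) (U 0) = g 0 := by
          rw [hU]
          rw [dot3_comb _ _ _ _ _ _ _ _ _ (hTT 0) (hNN 0) (hBB 0) (hTN 0) (hTB 0) (hNB 0)]
          simp only [hg]
          ring
        have hdot : dot3 ((Real.sqrt (g 0))⁻¹ • U 0) ((Real.sqrt (g 0))⁻¹ • U 0) = 1 := by
          rw [dot3_smul_both, hUU]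
          have hs := Real.sq_sqrt (le_of_lt (hgpos 0))
          have hsne : Real.sqrt (g 0) ≠ 0 := ne_of_gt (Real.sqrt_pos.mpr (hgpos 0))
          rw [inv_pow, hs]
          exact inv_mul_cancel₀ (ne_of_gt (hgpos 0))
        rw [h0] at hdot
        simp [dot3] at hdot
      · intro s
        have hc := hconst s
        rw [← hc, dot3_smul_right, hU]
        have hcomb : dot3 (a • T s + b • N s + c • B s)
            (u1 s • T s + u2 s • N s + u3 s • B s) = a * u1 s + b * u2 s + c * u3 s := by
          rw [dot3_comb _ _ _ _ _ _ _ _ _ (hTT s) (hNN s) (hBB s) (hTN s) (hTB s) (hNB s)]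
        rw [hcomb]
        have hzero : a * u1 s + b * u2 s + c * u3 s = 0 := by
          simp only [hu1, hu2, hu3]
          ring
        rw [hzero, mul_zero]
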